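/- Suppose f(v) = g(B v) for all v ∈ H, where g is a continuous linear functional on V. Let W̄ ⊆ V be the closure of the range of B and let w⁰ ∈ W̄ be the unique element with ⟨w⁰, w⟩_V = g(w) for all w ∈ W̄. Then the solutions u^ε of the scaled problem satisfy lim_{ε→0⁺} ‖B u^ε − w⁰‖_V = 0 and lim_{ε→0⁺} ( ε² ⟨A u^ε, A u^ε⟩_U + ⟨B u^ε, B u^ε⟩_V ) = ‖w⁰‖_V²; moreover, if f ≠ 0 then w⁰ ≠ 0, so the total strain energy converges to a nonzero limit. -/
import Mathlib


open RealInnerProductSpace Filter Topology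

/-- Suppose f(v) = g(B v) for all v ∈ H, where g is a continuous linear functional on V.
Let W̄ ⊆ V be the closure of the range of B and let w⁰ ∈ W̄ be the unique element with
⟨w⁰, w⟩_V = g(w) for all w ∈ W̄. Then the solutions u^ε of the scaled problem satisfy
lim_{ε→0⁺} ‖B u^ε − w⁰‖_V = 0 and
lim_{ε→0⁺} (ε² ⟨A u^ε, A u^ε⟩_U + ⟨B u^ε, B u^ε⟩_V) = ‖w⁰‖_V²; moreover, if f ≠ 0 then
w⁰ ≠ 0, so the total strain energy converges to a nonzero limit. -/
theorem stmt_10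
    {H U V : Type*}
    [NormedAddCommGroup H] [InnerProductSpace ℝ H] [CompleteSpace H]
    [NormedAddCommGroup U] [InnerProductSpace ℝ U] [CompleteSpace U]
    [NormedAddCommGroup V] [InnerProductSpace ℝ V] [CompleteSpace V]
    (A : H →L[ℝ] U) (B : H →L[ℝ] V)
    (c₁ c₂ : ℝ) (hc₁ : 0 < c₁) (hc₂ : 0 < c₂)
    (hlow : ∀ v : H, c₁ * ‖v‖ ≤ ‖A v‖ + ‖B v‖)
    (hup : ∀ v : H, ‖A v‖ + ‖B v‖ ≤ c₂ * ‖v‖)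
    (f : H →L[ℝ] ℝ)
    (g : V →L[ℝ] ℝ) (hfg : ∀ v : H, f v = g (B v))
    (w₀ : V)
    (hw₀ : w₀ ∈ (LinearMap.range (B : H →ₗ[ℝ] V)).topologicalClosure)
    (hw₀' : ∀ w ∈ (LinearMap.range (B : H →ₗ[ℝ] V)).topologicalClosure,
      ⟪w₀, w⟫ = g w)
    (u : ℝ → H)
    (hu : ∀ ε : ℝ, 0 < ε → ∀ v : H,
      ε ^ 2 * ⟪A (u ε), A v⟫ + ⟪B (u ε), B v⟫ = f v) :
    Tendsto (fun ε : ℝ => ‖B (u ε) - w₀‖) (𝓝[>] 0) (𝓝 0) ∧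
    Tendsto (fun ε : ℝ => ε ^ 2 * ⟪A (u ε), A (u ε)⟫ + ⟪B (u ε), B (u ε)⟫)
      (𝓝[>] 0) (𝓝 (‖w₀‖ ^ 2)) ∧
    (f ≠ 0 → w₀ ≠ 0) := by

  -- g ∘ B is representable by w₀ on the range
  have hgB : ∀ v : H, g (B v) = ⟪w₀, B v⟫ := fun v =>
    (hw₀' (B v) (Submodule.le_topologicalClosure _ ⟨v, rfl⟩)).symm
  -- variational equation relative to w₀
  have key : ∀ ε : ℝ, 0 < ε → ∀ w : H,
      ε ^ 2 * ⟪A (u ε), A w⟫ + ⟪B (u ε) - w₀, B w⟫ = 0 := by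
    intro ε hε w
    have h := hu ε hε w
    rw [hfg, hgB] at h
    rw [inner_sub_left]
    linarith
  set E : ℝ → ℝ := fun ε => ε ^ 2 * ‖A (u ε)‖ ^ 2 + ‖B (u ε) - w₀‖ ^ 2 with hEdef
  have hEnn : ∀ ε : ℝ, 0 < ε → 0 ≤ E ε := by
    intro ε hε
    have := sq_nonneg ε
    have := sq_nonneg ‖A (u ε)‖
    have := sq_nonneg ‖B (u ε) - w₀‖
    simp only [hEdef]
    nlinarith
  -- minimization property
  have hmin : ∀ ε : ℝ, 0 < ε → ∀ v : H, E ε ≤ ε ^ 2 * ‖A v‖ ^ 2 + ‖B v - w₀‖ ^ 2 := by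
    intro ε hε v
    have hA : A v = A (u ε) + A (v - u ε) := by rw [map_sub]; abel
    have hB : B v - w₀ = (B (u ε) - w₀) + B (v - u ε) := by rw [map_sub]; abel
    rw [hA, hB, norm_add_sq_real, norm_add_sq_real]
    have hk := key ε hε (v - u ε)
    have h1 : 0 ≤ ε ^ 2 * ‖A (v - u ε)‖ ^ 2 := by positivity
    have h2 : 0 ≤ ‖B (v - u ε)‖ ^ 2 := sq_nonneg _
    simp only [hEdef]
    nlinarith
  -- energy tends to 0
  have hE0 : Tendsto E (𝓝[>] (0 : ℝ)) (𝓝 0) := by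
    rw [tendsto_order]
    constructor
    · intro a ha
      filter_upwards [self_mem_nhdsWithin] with ε hε
      exact lt_of_lt_of_le ha (hEnn ε hε)
    · intro a ha
      have hw : w₀ ∈ closure ((LinearMap.range (B : H →ₗ[ℝ] V) : Submodule ℝ V) : Set V) := hw₀
      rw [Metric.mem_closure_iff] at hw
      obtain ⟨b, hb, hdist⟩ := hw (Real.sqrt (a / 2)) (by positivity)
      obtain ⟨v, rfl⟩ := hb
      have hBv : ‖B v - w₀‖ ^ 2 < a / 2 := by
        have h1 : ‖B v - w₀‖ < Real.sqrt (a / 2) := by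
          rw [← dist_eq_norm, dist_comm]; exact hdist
        have h2 : ‖B v - w₀‖ ^ 2 < Real.sqrt (a / 2) ^ 2 := by
          apply pow_lt_pow_left₀ h1 (norm_nonneg _)
          norm_num
        rwa [Real.sq_sqrt (by positivity : (0:ℝ) ≤ a / 2)] at h2
      set r : ℝ := Real.sqrt (a / 2) / (‖A v‖ + 1) with hrdef
      have hr : 0 < r := by positivity
      filter_upwards [Ioo_mem_nhdsGT_of_mem ⟨le_refl (0:ℝ), hr⟩] with ε hε
      have hε0 : 0 < ε := hε.1
      have hεr : ε < r := hε.2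
      have hAv : ε ^ 2 * ‖A v‖ ^ 2 < a / 2 := by
        have h1 : ε * (‖A v‖ + 1) < Real.sqrt (a / 2) := by
          rw [← lt_div_iff₀ (by positivity)]
          exact hεr
        have h2 : ε * ‖A v‖ < Real.sqrt (a / 2) := by
          nlinarith [norm_nonneg (A v)]
        have h3 : (ε * ‖A v‖) ^ 2 < Real.sqrt (a / 2) ^ 2 := by
          apply pow_lt_pow_left₀ h2 (by positivity)
          norm_num
        rw [Real.sq_sqrt (by positivity : (0:ℝ) ≤ a / 2)] at h3
        nlinarith
      calc E ε ≤ ε ^ 2 * ‖A v‖ ^ 2 + ‖B v - w₀‖ ^ 2 := hmin ε hε0 v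
        _ < a / 2 + a / 2 := by linarith
        _ = a := by ring
  -- ‖B u - w₀‖² → 0
  have hBsq : Tendsto (fun ε : ℝ => ‖B (u ε) - w₀‖ ^ 2) (𝓝[>] (0:ℝ)) (𝓝 0) := by
    apply squeeze_zero' (by filter_upwards with ε; positivity)
      (by filter_upwards [self_mem_nhdsWithin] with ε hε
          simp only [hEdef]
          nlinarith [sq_nonneg ε, sq_nonneg ‖A (u ε)‖]) hE0
  have hBnorm : Tendsto (fun ε : ℝ => ‖B (u ε) - w₀‖) (𝓝[>] (0:ℝ)) (𝓝 0) := by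
    have := (Real.continuous_sqrt.tendsto 0).comp hBsq
    simp only [Function.comp_def, Real.sqrt_sq (norm_nonneg _), Real.sqrt_zero] at this
    exact this
  refine ⟨hBnorm, ?_, ?_⟩
  · -- energy limit
    have hAsq : Tendsto (fun ε : ℝ => ε ^ 2 * ‖A (u ε)‖ ^ 2) (𝓝[>] (0:ℝ)) (𝓝 0) := by
      apply squeeze_zero' (by filter_upwards with ε; positivity)
        (by filter_upwards [self_mem_nhdsWithin] with ε hε
            simp only [hEdef]
            nlinarith [sq_nonneg ‖B (u ε) - w₀‖]) hE0
    have hBu : Tendsto (fun ε : ℝ => B (u ε)) (𝓝[>] (0:ℝ)) (𝓝 w₀) := by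
      rw [tendsto_iff_norm_sub_tendsto_zero]
      exact hBnorm
    have hBn2 : Tendsto (fun ε : ℝ => ‖B (u ε)‖ ^ 2) (𝓝[>] (0:ℝ)) (𝓝 (‖w₀‖ ^ 2)) :=
      ((continuous_norm.tendsto w₀).comp hBu).pow 2
    have := hAsq.add hBn2
    rw [zero_add] at this
    apply this.congr
    intro ε
    rw [real_inner_self_eq_norm_sq, real_inner_self_eq_norm_sq]
  · -- nonvanishing
    intro hf hw0
    apply hf
    ext v
    have := hfg v
    rw [hgB, hw0, inner_zero_left] at this
    simpa using this
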